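/- Let (g,[·,·]) be a finite-dimensional Lie algebra over a field k of characteristic 0 equipped with a nondegenerate skew-symmetric bilinear form ω satisfying ω([x,y],z) + ω([y,z],x) + ω([z,x],y) = 0 for all x,y,z ∈ g. Then there is a unique bilinear operation ∘ on g satisfying ω(x∘y,z) = −ω(y,[x,z]) for all x,y,z ∈ g; moreover (g,∘) is a pre-Lie algebra and x∘y − y∘x = [x,y] for all x,y ∈ g. -/

import Mathlib

open TensorProduct

noncomputable section

variable {k : Type*} [Field k]
section AlgDefs
variable {A : Type*} [AddCommGroup A] [Module k A]

/-- A pre-Lie algebra structure: `(a∘b)∘c − a∘(b∘c) = (b∘a)∘c − b∘(a∘c)`. -/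
def IsPreLie (op : A →ₗ[k] A →ₗ[k] A) : Prop :=
  ∀ a b c : A, op (op a b) c - op a (op b c) = op (op b a) c - op b (op a c)

/-- A Novikov algebra: a pre-Lie algebra with `(a∘b)∘c = (a∘c)∘b`. -/
def IsNovikov (op : A →ₗ[k] A →ₗ[k] A) : Prop :=
  IsPreLie op ∧ ∀ a b c : A, op (op a b) c = op (op a c) b

/-- A pre-Novikov algebra with operations `l = ◁` and `r = ▷`,
writing `a∘b := a◁b + a▷b`. -/
def IsPreNovikov (l r : A →ₗ[k] A →ₗ[k] A) : Prop :=
  (∀ a b c : A, r a (r b c) = r (l a b + r a b) c + r b (r a c) - r (l b a + r b a) c) ∧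
  (∀ a b c : A, r a (l b c) = l (r a b) c + l b (l a c + r a c) - l (l b a) c) ∧
  (∀ a b c : A, r (l a b + r a b) c = l (r a c) b) ∧
  (∀ a b c : A, l (l a b) c = l (l a c) b)

/-- A right Novikov algebra. -/
def IsRightNovikov (d : A →ₗ[k] A →ₗ[k] A) : Prop :=
  (∀ x y z : A, d (d x y) z - d x (d y z) = d (d x z) y - d x (d z y)) ∧
  (∀ x y z : A, d x (d y z) = d y (d x z))

/-- A right Novikov dialgebra with operations `dl = ⊣` and `dr = ⊢`. -/
def IsRightNovikovDialgebra (dl dr : A →ₗ[k] A →ₗ[k] A) : Prop :=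
  (∀ x y z : A, dr x (dr y z) = dr y (dr x z)) ∧
  (∀ x y z : A, dr x (dl y z) = dl y (dl x z)) ∧
  (∀ x y z : A, dr (dr x y - dl x y) z = 0) ∧
  (∀ x y z : A, dl x (dr y z - dl y z) = 0) ∧
  (∀ x y z : A, dr x (dr y z - dl z y) = dr (dr x y) z - dl (dr x z) y) ∧
  (∀ x y z : A, dl x (dr y z - dl z y) = dl (dl x y) z - dl (dl x z) y)

/-- A quadratic right Novikov algebra: a right Novikov algebra with a symmetric
nondegenerate bilinear form satisfying `(x⋄y,z) = −(x, y⋄z + z⋄y)`. -/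
def IsQuadraticRightNovikov (d : A →ₗ[k] A →ₗ[k] A) (bf : A →ₗ[k] A →ₗ[k] k) : Prop :=
  IsRightNovikov d ∧ (∀ x y : A, bf x y = bf y x) ∧
  (∀ x : A, (∀ y : A, bf x y = 0) → x = 0) ∧
  (∀ x y z : A, bf (d x y) z = - bf x (d y z + d z y))

/-- A quadratic pre-Lie algebra: a pre-Lie algebra with a skew-symmetric nondegenerate
bilinear form satisfying `ω(u∘v,w) = −ω(v, u∘w − w∘u)`. -/
def IsQuadraticPreLie (op : A →ₗ[k] A →ₗ[k] A) (w : A →ₗ[k] A →ₗ[k] k) : Prop :=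
  IsPreLie op ∧ (∀ u v : A, w u v = - w v u) ∧
  (∀ u : A, (∀ v : A, w u v = 0) → u = 0) ∧
  (∀ u v x : A, w (op u v) x = - w v (op u x - op x u))

end AlgDefs

/-- A finite-dimensional symplectic Lie algebra `(g, [·,·], ω)` admits
a unique bilinear operation `∘` with `ω(x∘y,z) = −ω(y,[x,z])`; moreover `∘` is
pre-Lie and `x∘y − y∘x = [x,y]`. -/
theorem symplectic_lie_compatible_preLie (k g : Type*) [Field k] [CharZero k]
    [LieRing g] [LieAlgebra k g] [FiniteDimensional k g]
    (ω : g →ₗ[k] g →ₗ[k] k)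
    (hskew : ∀ x y : g, ω x y = - ω y x)
    (hnd : ∀ x : g, (∀ y : g, ω x y = 0) → x = 0)
    (hcocycle : ∀ x y z : g, ω ⁅x, y⁆ z + ω ⁅y, z⁆ x + ω ⁅z, x⁆ y = 0) :
    (∃! op : g →ₗ[k] g →ₗ[k] g, ∀ x y z : g, ω (op x y) z = - ω y ⁅x, z⁆) ∧
    (∀ op : g →ₗ[k] g →ₗ[k] g, (∀ x y z : g, ω (op x y) z = - ω y ⁅x, z⁆) →
      IsPreLie op ∧ ∀ x y : g, op x y - op y x = ⁅x, y⁆) := by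
  classical
  -- nondegeneracy as a `BilinForm.Nondegenerate`
  have hndB : LinearMap.BilinForm.Nondegenerate (ω : LinearMap.BilinForm k g) :=
    ⟨hnd, fun y hy => hnd y (fun x => by rw [hskew, hy x, neg_zero])⟩
  -- separation: equal pairings against all `z` force equality
  have hsep : ∀ a b : g, (∀ z : g, ω a z = ω b z) → a = b := by
    intro a b h
    have h0 : a - b = 0 := hnd (a - b) (fun z => by
      rw [map_sub, LinearMap.sub_apply, h, sub_self])
    exact sub_eq_zero.mp h0
  set E := LinearMap.BilinForm.toDual (ω : LinearMap.BilinForm k g) hndB with hE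
  -- construct the operation
  set op : g →ₗ[k] g →ₗ[k] g := LinearMap.mk₂ k
      (fun x y => E.symm (-((ω y) ∘ₗ (LieAlgebra.ad k g x))))
      (by
        intro x x' y
        rw [← map_add]
        refine congrArg E.symm ?_
        ext z
        simp [add_lie]
        ring)
      (by
        intro c x y
        rw [← map_smul]
        refine congrArg E.symm ?_
        ext z
        simp [smul_lie])
      (by
        intro x y y'
        rw [← map_add]
        refine congrArg E.symm ?_
        ext z
        simp
        ring)
      (by
        intro c x y
        rw [← map_smul]
        refine congrArg E.symm ?_
        ext z
        simp) with hopdef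
  have hop : ∀ x y z : g, ω (op x y) z = - ω y ⁅x, z⁆ := by
    intro x y z
    have h := LinearMap.BilinForm.apply_toDual_symm_apply (hB := hndB)
        (f := -((ω y) ∘ₗ (LieAlgebra.ad k g x))) (v := z)
    simp only [hopdef, hE, LinearMap.mk₂_apply]
    simpa using h
  constructor
  · exact ⟨op, hop, fun op' h' => by
      ext x y
      exact hsep _ _ (fun z => by rw [h' x y z, hop x y z])⟩
  · intro p hP
    -- commutator identity
    have hcomm : ∀ x y : g, p x y - p y x = ⁅x, y⁆ := by
      intro x y
      apply hsep
      intro z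
      have hc := hcocycle x y z
      have h1 : ω ⁅y, z⁆ x = - ω x ⁅y, z⁆ := hskew _ _
      have h2 : ω ⁅z, x⁆ y = - ω y ⁅z, x⁆ := hskew _ _
      have h3 : ω y ⁅z, x⁆ = - ω y ⁅x, z⁆ := by
        rw [← lie_skew, map_neg]
      have h4 : ω (p x y - p y x) z = - ω y ⁅x, z⁆ + ω x ⁅y, z⁆ := by
        rw [map_sub, LinearMap.sub_apply, hP x y z, hP y x z]
        ring
      rw [h4]
      rw [h1, h2, h3] at hc
      linear_combination -hc
    -- key identity: `p ⁅a,b⁆ c = p a (p b c) - p b (p a c)`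
    have key : ∀ a b c : g, p ⁅a, b⁆ c = p a (p b c) - p b (p a c) := by
      intro a b c
      apply hsep
      intro z
      have h1 : ω (p a (p b c)) z = ω c ⁅b, ⁅a, z⁆⁆ := by
        rw [hP a (p b c) z, hP b c ⁅a, z⁆, neg_neg]
      have h2 : ω (p b (p a c)) z = ω c ⁅a, ⁅b, z⁆⁆ := by
        rw [hP b (p a c) z, hP a c ⁅b, z⁆, neg_neg]
      rw [map_sub, LinearMap.sub_apply, h1, h2, hP ⁅a, b⁆ c z, lie_lie, map_sub,
        neg_sub]
    constructor
    · intro a b c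
      rw [sub_eq_sub_iff_sub_eq_sub, ← LinearMap.sub_apply, ← map_sub, hcomm a b,
        key a b c]
    · exact hcomm
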